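/- arXiv:1609.09000 — 2 statements merged into one kernel-verified Lean document; each statement's English description precedes it below -/
import Mathlib

section
/- Bound on frequent paths of length one: let 𝒢 be a finite nonempty family of labeled graphs, each with at most V_max vertices, and let 0 < ls ≤ 1 be a minimum support threshold. Then the number of pairwise non-isomorphic labeled single-edge graphs (paths of length one, i.e., two labeled vertices joined by a labeled edge) that are frequent over 𝒢 with threshold ls is at most V_max² / ls. -/
open scoped Classical

/-- An undirected labeled graph: a finite vertex set (of naturals), a finite set of
undirected edges (unordered pairs of distinct vertices contained in the vertex set),
and labeling functions for vertices and edges into a label type `L`. -/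
structure LGraph (L : Type) where
  verts : Finset ℕ
  edges : Finset (Sym2 ℕ)
  edge_mem : ∀ e ∈ edges, ∀ v ∈ e, v ∈ verts
  edge_not_diag : ∀ e ∈ edges, ¬ e.IsDiag
  vlabel : ℕ → L
  elabel : Sym2 ℕ → L

/-- `ψ` is a label-preserving subgraph isomorphism from `G` to `H`. -/
def IsSubIso {L : Type} (G H : LGraph L) (ψ : ℕ → ℕ) : Prop :=
  Set.InjOn ψ (G.verts : Set ℕ) ∧
  (∀ v ∈ G.verts, ψ v ∈ H.verts ∧ H.vlabel (ψ v) = G.vlabel v) ∧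
  (∀ e ∈ G.edges, Sym2.map ψ e ∈ H.edges ∧ H.elabel (Sym2.map ψ e) = G.elabel e)

/-- `G ⊆ H`: there exists a label-preserving subgraph isomorphism from `G` to `H`;
we also say `G` is supported by `H`. -/
def IsSub {L : Type} (G H : LGraph L) : Prop := ∃ ψ : ℕ → ℕ, IsSubIso G H ψ

/-- Two labeled graphs are isomorphic iff each is subgraph-isomorphic to the other. -/
def Isomorphic {L : Type} (G H : LGraph L) : Prop := IsSub G H ∧ IsSub H G

/-- The size `|G| = |V(G)| + |E(G)|` of a labeled graph. -/
def gsize {L : Type} (G : LGraph L) : ℕ := G.verts.card + G.edges.card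

/-- The support of `G` over a finite (indexed) family of graphs: the fraction of
graphs in the family that support `G`. -/
noncomputable def support {L ι : Type} (G : LGraph L) (D : Finset ι) (f : ι → LGraph L) : ℝ :=
  ((D.filter fun i => IsSub G (f i)).card : ℝ) / (D.card : ℝ)

/-- The coverage of a graph `G` by a graph `R`: `cov(R,G) = |R|/|G|`. -/
noncomputable def cov {L : Type} (R G : LGraph L) : ℝ := (gsize R : ℝ) / (gsize G : ℝ)

/-- A path of length one: a labeled graph with exactly two vertices joined by one edge. -/
def IsPathOne {L : Type} (G : LGraph L) : Prop := G.verts.card = 2 ∧ G.edges.card = 1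

lemma path_structure {L : Type} (G : LGraph L) (h : IsPathOne G) :
    ∃ u v : ℕ, u ≠ v ∧ G.verts = {u, v} ∧ G.edges = {s(u, v)} := by
  obtain ⟨e, he⟩ := Finset.card_eq_one.mp h.2
  have heE : e ∈ G.edges := by simp [he]
  revert heE
  induction e using Sym2.ind with
  | _ a b =>
    intro heE
    have hab : a ≠ b := fun h' => G.edge_not_diag _ heE (by simp [h'])
    have haV : a ∈ G.verts := G.edge_mem _ heE a (by simp)
    have hbV : b ∈ G.verts := G.edge_mem _ heE b (by simp)
    refine ⟨a, b, hab, ?_, he⟩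
    have hsub : ({a, b} : Finset ℕ) ⊆ G.verts := by
      intro x hx
      rcases Finset.mem_insert.mp hx with rfl | hx
      · exact haV
      · exact (Finset.mem_singleton.mp hx) ▸ hbV
    have hcard : G.verts.card ≤ ({a, b} : Finset ℕ).card := by
      rw [Finset.card_pair hab, h.1]
    exact (Finset.eq_of_subset_of_card_le hsub hcard).symm

lemma subIso_pair {L : Type} (G G' : LGraph L) (u v u' v' : ℕ)
    (huv : u ≠ v) (hu'v' : u' ≠ v')
    (hGv : G.verts = {u, v}) (hGe : G.edges = {s(u, v)})
    (hG'v : G'.verts = {u', v'}) (hG'e : G'.edges = {s(u', v')})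
    (hl1 : G'.vlabel u' = G.vlabel u) (hl2 : G'.vlabel v' = G.vlabel v)
    (hl3 : G'.elabel s(u', v') = G.elabel s(u, v)) : IsSub G G' := by
  refine ⟨fun w => if w = u then u' else v', ?_, ?_, ?_⟩
  · intro w hw w' hw' hww
    simp only [hGv, Finset.coe_insert, Finset.coe_singleton, Set.mem_insert_iff,
      Set.mem_singleton_iff] at hw hw'
    rcases hw with rfl | rfl <;> rcases hw' with rfl | rfl <;>
      simp_all [huv, huv.symm, hu'v', hu'v'.symm]
  · intro w hw
    rw [hGv] at hw
    rcases Finset.mem_insert.mp hw with rfl | hw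
    · simp [hG'v, hl1]
    · rw [Finset.mem_singleton] at hw
      subst hw
      simp [hG'v, huv.symm, hl2]
  · intro e he
    rw [hGe, Finset.mem_singleton] at he
    subst he
    have hmap : Sym2.map (fun w => if w = u then u' else v') s(u, v) = s(u', v') := by
      simp [Sym2.map_pair_eq, huv.symm]
    rw [hmap]
    exact ⟨by simp [hG'e], hl3⟩

lemma iso_of_eq_image {L : Type} {G G' H : LGraph L} {ψ ψ' : ℕ → ℕ} {e e' : Sym2 ℕ}
    (hG : IsPathOne G) (hG' : IsPathOne G') (he : e ∈ G.edges) (he' : e' ∈ G'.edges)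
    (hψ : IsSubIso G H ψ) (hψ' : IsSubIso G' H ψ')
    (heq : Sym2.map ψ e = Sym2.map ψ' e') : Isomorphic G G' := by
  obtain ⟨u, v, huv, hGv, hGe⟩ := path_structure G hG
  obtain ⟨u', v', hu'v', hG'v, hG'e⟩ := path_structure G' hG'
  rw [hGe, Finset.mem_singleton] at he
  rw [hG'e, Finset.mem_singleton] at he'
  subst he he'
  rw [Sym2.map_pair_eq, Sym2.map_pair_eq, Sym2.eq_iff] at heq
  have huV : u ∈ G.verts := by simp [hGv]
  have hvV : v ∈ G.verts := by simp [hGv]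
  have hu'V : u' ∈ G'.verts := by simp [hG'v]
  have hv'V : v' ∈ G'.verts := by simp [hG'v]
  have heuv : s(u, v) ∈ G.edges := by simp [hGe]
  have heu'v' : s(u', v') ∈ G'.edges := by simp [hG'e]
  have hlu := (hψ.2.1 u huV).2
  have hlv := (hψ.2.1 v hvV).2
  have hlu' := (hψ'.2.1 u' hu'V).2
  have hlv' := (hψ'.2.1 v' hv'V).2
  have hle := (hψ.2.2 _ heuv).2
  have hle' := (hψ'.2.2 _ heu'v').2
  rw [Sym2.map_pair_eq] at hle
  rw [Sym2.map_pair_eq] at hle'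
  rcases heq with ⟨h1, h2⟩ | ⟨h1, h2⟩
  · have l1 : G'.vlabel u' = G.vlabel u := by rw [← hlu', ← h1, hlu]
    have l2 : G'.vlabel v' = G.vlabel v := by rw [← hlv', ← h2, hlv]
    have l3 : G'.elabel s(u', v') = G.elabel s(u, v) := by
      rw [← hle', ← h1, ← h2, hle]
    exact ⟨subIso_pair G G' u v u' v' huv hu'v' hGv hGe hG'v hG'e l1 l2 l3,
      subIso_pair G' G u' v' u v hu'v' huv hG'v hG'e hGv hGe l1.symm l2.symm l3.symm⟩
  · have l1 : G'.vlabel v' = G.vlabel u := by rw [← hlv', ← h1, hlu]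
    have l2 : G'.vlabel u' = G.vlabel v := by rw [← hlu', ← h2, hlv]
    have l3 : G'.elabel s(v', u') = G.elabel s(u, v) := by
      rw [show s(v', u') = s(u', v') from Sym2.eq_swap, ← hle', ← h1, ← h2,
        show s(ψ v, ψ u) = s(ψ u, ψ v) from Sym2.eq_swap, hle]
    have hG'v' : G'.verts = {v', u'} := by rw [hG'v, Finset.pair_comm]
    have hG'e' : G'.edges = {s(v', u')} := by rw [hG'e, Sym2.eq_swap]
    exact ⟨subIso_pair G G' u v v' u' huv hu'v'.symm hGv hGe hG'v' hG'e' l1 l2 l3,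
      subIso_pair G' G v' u' u v hu'v'.symm huv hG'v' hG'e' hGv hGe l1.symm l2.symm l3.symm⟩

lemma edges_card_le_sq {L : Type} (H : LGraph L) : H.edges.card ≤ H.verts.card ^ 2 := by
  have hsub : H.edges ⊆ (H.verts ×ˢ H.verts).image (fun a : ℕ × ℕ => s(a.1, a.2)) := by
    intro e he
    revert he
    induction e using Sym2.ind with
    | _ a b =>
      intro he
      have ha := H.edge_mem _ he a (by simp)
      have hb := H.edge_mem _ he b (by simp)
      exact Finset.mem_image.mpr ⟨(a, b), Finset.mem_product.mpr ⟨ha, hb⟩, rfl⟩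
  calc H.edges.card ≤ ((H.verts ×ˢ H.verts).image (fun a : ℕ × ℕ => s(a.1, a.2))).card :=
        Finset.card_le_card hsub
    _ ≤ (H.verts ×ˢ H.verts).card := Finset.card_image_le
    _ = H.verts.card ^ 2 := by rw [Finset.card_product, sq]

/-- if every graph of the nonempty family 𝒢 has at most V_max vertices and
0 < ls ≤ 1, then the number of pairwise non-isomorphic labeled single-edge graphs that
are frequent over 𝒢 with threshold ls is at most V_max² / ls. -/
theorem frequent_paths_bound {L ι κ : Type} (𝒢 : Finset ι) (f : ι → LGraph L)
    (hne : 𝒢.Nonempty) (Vmax : ℕ) (hV : ∀ i ∈ 𝒢, (f i).verts.card ≤ Vmax)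
    (ls : ℝ) (h0 : 0 < ls) (h1 : ls ≤ 1)
    (P : Finset κ) (p : κ → LGraph L)
    (hpath : ∀ j ∈ P, IsPathOne (p j))
    (hdist : ∀ j ∈ P, ∀ j' ∈ P, j ≠ j' → ¬ Isomorphic (p j) (p j'))
    (hfreq : ∀ j ∈ P, ls ≤ support (p j) 𝒢 f) :
    (P.card : ℝ) ≤ (Vmax : ℝ) ^ 2 / ls := by
  have key1 : ∀ i ∈ 𝒢, (P.filter fun j => IsSub (p j) (f i)).card ≤ Vmax ^ 2 := by
    intro i hi
    have step : (P.filter fun j => IsSub (p j) (f i)).card ≤ (f i).edges.card := by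
      have hex : ∀ j : κ, ∃ ε : Sym2 ℕ,
          j ∈ P.filter (fun j => IsSub (p j) (f i)) →
          ε ∈ (f i).edges ∧ ∃ ψ e, e ∈ (p j).edges ∧ IsSubIso (p j) (f i) ψ ∧
            Sym2.map ψ e = ε := by
        intro j
        by_cases hj : j ∈ P.filter (fun j => IsSub (p j) (f i))
        · have hsub : IsSub (p j) (f i) := (Finset.mem_filter.mp hj).2
          obtain ⟨ψ, hψ⟩ := hsub
          have hjP : j ∈ P := (Finset.mem_filter.mp hj).1
          obtain ⟨u, v, huv, hv, he⟩ := path_structure (p j) (hpath j hjP)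
          have hem : s(u, v) ∈ (p j).edges := by simp [he]
          exact ⟨Sym2.map ψ s(u, v), fun _ => ⟨(hψ.2.2 _ hem).1, ψ, s(u, v), hem, hψ, rfl⟩⟩
        · exact ⟨s(0, 1), fun h => absurd h hj⟩
      choose F hF using hex
      refine Finset.card_le_card_of_injOn F (fun j hj => (hF j hj).1) ?_
      intro j hj j' hj' hFeq
      by_contra hne
      obtain ⟨-, ψ, e, heG, hψ, hmap⟩ := hF j hj
      obtain ⟨-, ψ', e', heG', hψ', hmap'⟩ := hF j' hj'
      have hjP : j ∈ P := (Finset.mem_filter.mp hj).1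
      have hj'P : j' ∈ P := (Finset.mem_filter.mp hj').1
      exact hdist j hjP j' hj'P hne
        (iso_of_eq_image (hpath j hjP) (hpath j' hj'P) heG heG' hψ hψ'
          (by rw [hmap, hmap', hFeq]))
    calc (P.filter fun j => IsSub (p j) (f i)).card ≤ (f i).edges.card := step
      _ ≤ (f i).verts.card ^ 2 := edges_card_le_sq (f i)
      _ ≤ Vmax ^ 2 := Nat.pow_le_pow_left (hV i hi) 2
  have n0 : (0 : ℝ) < (𝒢.card : ℝ) := by
    exact_mod_cast Finset.card_pos.mpr hne
  have hjj : ∀ j ∈ P, ls * (𝒢.card : ℝ) ≤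
      ((𝒢.filter fun i => IsSub (p j) (f i)).card : ℝ) := by
    intro j hj
    have h := hfreq j hj
    rw [support, le_div_iff₀ n0] at h
    exact h
  have hsum : (P.card : ℝ) * (ls * (𝒢.card : ℝ)) ≤
      ∑ j ∈ P, ((𝒢.filter fun i => IsSub (p j) (f i)).card : ℝ) := by
    have := Finset.card_nsmul_le_sum P
      (fun j => ((𝒢.filter fun i => IsSub (p j) (f i)).card : ℝ)) (ls * (𝒢.card : ℝ)) hjj
    simpa [nsmul_eq_mul] using this
  have hswap : ∑ j ∈ P, ((𝒢.filter fun i => IsSub (p j) (f i)).card) =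
      ∑ i ∈ 𝒢, ((P.filter fun j => IsSub (p j) (f i)).card) := by
    simp_rw [Finset.card_filter]
    exact Finset.sum_comm
  have hbound : ∑ i ∈ 𝒢, ((P.filter fun j => IsSub (p j) (f i)).card) ≤
      𝒢.card * Vmax ^ 2 := by
    calc ∑ i ∈ 𝒢, ((P.filter fun j => IsSub (p j) (f i)).card)
        ≤ ∑ _i ∈ 𝒢, Vmax ^ 2 := Finset.sum_le_sum key1
      _ = 𝒢.card * Vmax ^ 2 := by rw [Finset.sum_const, smul_eq_mul]
  have hreal : (P.card : ℝ) * (ls * (𝒢.card : ℝ)) ≤ (𝒢.card : ℝ) * (Vmax : ℝ) ^ 2 := by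
    calc (P.card : ℝ) * (ls * (𝒢.card : ℝ))
        ≤ ∑ j ∈ P, ((𝒢.filter fun i => IsSub (p j) (f i)).card : ℝ) := hsum
      _ = ((∑ j ∈ P, ((𝒢.filter fun i => IsSub (p j) (f i)).card) : ℕ) : ℝ) := by
          push_cast; ring_nf
      _ = ((∑ i ∈ 𝒢, ((P.filter fun j => IsSub (p j) (f i)).card) : ℕ) : ℝ) := by
          rw [hswap]
      _ ≤ ((𝒢.card * Vmax ^ 2 : ℕ) : ℝ) := by exact_mod_cast hbound
      _ = (𝒢.card : ℝ) * (Vmax : ℝ) ^ 2 := by push_cast; ring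
  rw [le_div_iff₀ h0]
  nlinarith [hreal, n0, h0]
end

section
/- Inhomogeneous clusters cannot attain optimal values for both homogeneity criteria: if a finite set C of labeled graphs contains two graphs that are not isomorphic, then for every labeled graph R, either sup(R, C) < 1 or there exists G ∈ C with cov(R, G) < 1. -/
open scoped Classical

lemma edge_inj {L : Type} {G H : LGraph L} {ψ : ℕ → ℕ} (h : IsSubIso G H ψ) :
    Set.InjOn (Sym2.map ψ) (G.edges : Set (Sym2 ℕ)) := by
  intro e he e' he' heq
  simp only [Finset.mem_coe] at he he'
  induction e using Sym2.ind with
  | _ a b =>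
  induction e' using Sym2.ind with
  | _ c d =>
  have ha : a ∈ G.verts := G.edge_mem _ he a (by simp)
  have hb : b ∈ G.verts := G.edge_mem _ he b (by simp)
  have hc : c ∈ G.verts := G.edge_mem _ he' c (by simp)
  have hd : d ∈ G.verts := G.edge_mem _ he' d (by simp)
  simp only [Sym2.map_pair_eq, Sym2.eq_iff] at heq ⊢
  rcases heq with ⟨h1, h2⟩ | ⟨h1, h2⟩
  · exact Or.inl ⟨h.1 ha hc h1, h.1 hb hd h2⟩
  · exact Or.inr ⟨h.1 ha hd h1, h.1 hb hc h2⟩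

lemma gsize_le {L : Type} {G H : LGraph L} (h : IsSub G H) : gsize G ≤ gsize H := by
  obtain ⟨ψ, hψ⟩ := h
  have h1 : G.verts.card ≤ H.verts.card :=
    Finset.card_le_card_of_injOn ψ (fun v hv => (hψ.2.1 v hv).1) hψ.1
  have h2 : G.edges.card ≤ H.edges.card :=
    Finset.card_le_card_of_injOn (Sym2.map ψ) (fun e he => (hψ.2.2 e he).1) (edge_inj hψ)
  exact Nat.add_le_add h1 h2

lemma isSub_trans {L : Type} {G H K : LGraph L} (h1 : IsSub G H) (h2 : IsSub H K) :
    IsSub G K := by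
  obtain ⟨ψ, hψ⟩ := h1
  obtain ⟨χ, hχ⟩ := h2
  refine ⟨χ ∘ ψ, ?_, ?_, ?_⟩
  · intro x hx y hy hxy
    exact hψ.1 hx hy (hχ.1 (by simpa using (hψ.2.1 x hx).1) (by simpa using (hψ.2.1 y hy).1) hxy)
  · intro v hv
    obtain ⟨m1, l1⟩ := hψ.2.1 v hv
    obtain ⟨m2, l2⟩ := hχ.2.1 _ m1
    exact ⟨m2, by simp [Function.comp, l2, l1]⟩
  · intro e he
    obtain ⟨m1, l1⟩ := hψ.2.2 e he
    obtain ⟨m2, l2⟩ := hχ.2.2 _ m1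
    rw [← Sym2.map_map] at *
    exact ⟨m2, by rw [l2, l1]⟩

lemma isSub_inv {L : Type} {G H : LGraph L} (h : IsSub G H) (hsz : gsize H ≤ gsize G) :
    IsSub H G := by
  obtain ⟨ψ, hψ⟩ := h
  have hvsub : G.verts.image ψ ⊆ H.verts := by
    intro w hw; obtain ⟨v, hv, rfl⟩ := Finset.mem_image.1 hw; exact (hψ.2.1 v hv).1
  have hesub : G.edges.image (Sym2.map ψ) ⊆ H.edges := by
    intro e he; obtain ⟨e', he', rfl⟩ := Finset.mem_image.1 he; exact (hψ.2.2 e' he').1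
  have hvcard : (G.verts.image ψ).card = G.verts.card := Finset.card_image_of_injOn hψ.1
  have hecard : (G.edges.image (Sym2.map ψ)).card = G.edges.card :=
    Finset.card_image_of_injOn (edge_inj hψ)
  have hv1 : G.verts.card ≤ H.verts.card := hvcard ▸ Finset.card_le_card hvsub
  have he1 : G.edges.card ≤ H.edges.card := hecard ▸ Finset.card_le_card hesub
  have hveq : H.verts.card = G.verts.card := by
    have := hsz; unfold gsize at this; omega
  have heeq : H.edges.card = G.edges.card := by
    have := hsz; unfold gsize at this; omega
  have hvimg : G.verts.image ψ = H.verts :=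
    Finset.eq_of_subset_of_card_le hvsub (by omega)
  have heimg : G.edges.image (Sym2.map ψ) = H.edges :=
    Finset.eq_of_subset_of_card_le hesub (by omega)
  set φ := Function.invFunOn ψ (G.verts : Set ℕ) with hφ
  have hsurj : ∀ w ∈ H.verts, φ w ∈ G.verts ∧ ψ (φ w) = w := by
    intro w hw
    rw [← hvimg] at hw
    obtain ⟨v, hv, rfl⟩ := Finset.mem_image.1 hw
    have h1 := Function.invFunOn_apply_mem (f := ψ) (s := (G.verts : Set ℕ)) (by simpa using hv)
    have h2 := Function.invFunOn_apply_eq (f := ψ) (s := (G.verts : Set ℕ)) (by simpa using hv)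
    exact ⟨by simpa using h1, h2⟩
  have hleft : ∀ v ∈ G.verts, φ (ψ v) = v := by
    intro v hv
    have hw : ψ v ∈ H.verts := (hψ.2.1 v hv).1
    obtain ⟨hm, he⟩ := hsurj _ hw
    exact hψ.1 (by simpa using hm) (by simpa using hv) he
  refine ⟨φ, ?_, ?_, ?_⟩
  · intro x hx y hy hxy
    simp only [Finset.mem_coe] at hx hy
    rw [← (hsurj x hx).2, ← (hsurj y hy).2, hxy]
  · intro w hw
    obtain ⟨hm, he⟩ := hsurj w hw
    refine ⟨hm, ?_⟩
    have := (hψ.2.1 _ hm).2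
    rw [he] at this
    exact this.symm
  · intro e he
    rw [← heimg] at he
    obtain ⟨e', he', rfl⟩ := Finset.mem_image.1 he
    have hmap : Sym2.map φ (Sym2.map ψ e') = e' := by
      rw [Sym2.map_map]
      induction e' using Sym2.ind with
      | _ a b =>
        have ha : a ∈ G.verts := G.edge_mem _ he' a (by simp)
        have hb : b ∈ G.verts := G.edge_mem _ he' b (by simp)
        simp [Function.comp, hleft a ha, hleft b hb]
    rw [hmap]
    exact ⟨he', ((hψ.2.2 e' he').2).symm⟩

/-- inhomogeneous clusters cannot attain optimal values for both
homogeneity criteria: if C contains two non-isomorphic graphs, then for every graph R,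
either sup(R, C) < 1 or some G ∈ C has cov(R, G) < 1. -/
theorem inhomogeneous_cluster {L ι : Type} (C : Finset ι) (f : ι → LGraph L)
    (hinhom : ∃ i ∈ C, ∃ j ∈ C, ¬ Isomorphic (f i) (f j)) :
    ∀ R : LGraph L, support R C f < 1 ∨ ∃ i ∈ C, cov R (f i) < 1 := by
  intro R
  by_contra hcon
  push_neg at hcon
  obtain ⟨hsup, hcov⟩ := hcon
  obtain ⟨i, hi, j, hj, hij⟩ := hinhom
  have hCpos : (0 : ℝ) < C.card := by
    exact_mod_cast Finset.card_pos.2 ⟨i, hi⟩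
  -- support ≥ 1 forces filter = C
  have hfc : (C.filter fun k => IsSub R (f k)) = C := by
    apply Finset.eq_of_subset_of_card_le (Finset.filter_subset _ _)
    have := hsup
    unfold support at this
    rw [le_div_iff₀ hCpos, one_mul] at this
    exact_mod_cast this
  have hall : ∀ k ∈ C, IsSub R (f k) := by
    intro k hk
    rw [← hfc] at hk
    exact (Finset.mem_filter.1 hk).2
  -- cov ≥ 1 forces gsize (f k) ≤ gsize R
  have hsz : ∀ k ∈ C, gsize (f k) ≤ gsize R := by
    intro k hk
    have h1 := hcov k hk
    unfold cov at h1
    by_cases hz : (gsize (f k) : ℝ) = 0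
    · rw [hz, div_zero] at h1; linarith
    · have hpos : (0 : ℝ) < (gsize (f k) : ℝ) :=
        lt_of_le_of_ne (by positivity) (Ne.symm hz)
      rw [le_div_iff₀ hpos, one_mul] at h1
      exact_mod_cast h1
  have hinvi : IsSub (f i) R := isSub_inv (hall i hi) (hsz i hi)
  have hinvj : IsSub (f j) R := isSub_inv (hall j hj) (hsz j hj)
  exact hij ⟨isSub_trans hinvi (hall j hj), isSub_trans hinvj (hall i hi)⟩
end
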